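/- Let X_0 = {a}, X_1, ..., X_k be the similarity layers of a symmetric matrix A rooted at a. If x ∈ X_i for some 0 ≤ i ≤ k and y ∈ V \ (X_0 ∪ ... ∪ X_i), then there exists a path from a to x avoiding y in A. -/

import Mathlib

/-- The consecutive pairs of `l` avoid `z` with respect to the matrix `A`. -/
def AvoidChain {V : Type*} (A : V → V → ℝ) (z : V) (l : List V) : Prop :=
  l.Chain' fun u w => min (A u z) (A w z) < A u w

/-- `l` is a path from `x` to `y` avoiding `z` in `A`: a sequence of distinct
elements starting at `x`, ending at `y`, each consecutive pair avoiding `z`. -/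
def AvoidPath {V : Type*} (A : V → V → ℝ) (z x y : V) (l : List V) : Prop :=
  l.Nodup ∧ l.head? = some x ∧ l.getLast? = some y ∧ AvoidChain A z l

/-- `x ~^z y`: there is a path from `x` to `y` avoiding `z` in `A`. -/
def Avoids {V : Type*} (A : V → V → ℝ) (z x y : V) : Prop :=
  ∃ l, AvoidPath A z x y l

/-- `{x,y,z}` is a weighted asteroidal triple of `A`. -/
def IsWAT {V : Type*} (A : V → V → ℝ) (x y z : V) : Prop :=
  x ≠ y ∧ y ≠ z ∧ x ≠ z ∧ Avoids A z x y ∧ Avoids A x y z ∧ Avoids A y z x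

/-- `π` is a Robinson ordering of `A`. -/
def IsRobinsonOrdering {V : Type*} [Fintype V] (A : V → V → ℝ)
    (π : Fin (Fintype.card V) ≃ V) : Prop :=
  ∀ i j k : Fin (Fintype.card V), i < j → j < k →
    A (π i) (π k) ≤ min (A (π i) (π j)) (A (π j) (π k))

/-- `A` is Robinsonian: it admits a Robinson ordering. -/
def Robinsonian {V : Type*} [Fintype V] (A : V → V → ℝ) : Prop :=
  ∃ π : Fin (Fintype.card V) ≃ V, IsRobinsonOrdering A π

/-- `S` is strongly homogeneous for `A`. -/
def StronglyHomogeneous {V : Type*} [DecidableEq V] (A : V → V → ℝ) (S : Finset V) : Prop :=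
  ∀ x ∉ S, ∀ y ∈ S, ∀ z ∈ S, A x y = A x z ∧ A x y ≤ A y z

/-- `a` is critical for `A`: between any two distinct elements of `V \ {a}`
there is a path avoiding `a`. -/
def IsCritical {V : Type*} (A : V → V → ℝ) (a : V) : Prop :=
  ∀ x y : V, x ≠ a → y ≠ a → x ≠ y → Avoids A a x y

/-- The similarity layers of `A` rooted at `a`, together with the union of the
layers so far: `(simLayersAux A a n).1` is the `n`-th layer `X_n` and
`(simLayersAux A a n).2 = X_0 ∪ ⋯ ∪ X_n`. -/
def simLayersAux {V : Type*} (A : V → V → ℝ) (a : V) : ℕ → Set V × Set V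
  | 0 => ({a}, {a})
  | n + 1 =>
    let U := (simLayersAux A a n).2
    let L := { y | y ∉ U ∧ ∀ x ∈ U, ∀ z ∉ U, A x z ≤ A x y }
    (L, U ∪ L)

/-- The `n`-th similarity layer `X_n` of `A` rooted at `a`. -/
def simLayer {V : Type*} (A : V → V → ℝ) (a : V) (n : ℕ) : Set V :=
  (simLayersAux A a n).1

lemma key_avoid {V : Type*} (A : V → V → ℝ) (a : V) (i : ℕ) :
    ∀ u ∈ (simLayersAux A a i).2, ∀ y, y ∉ (simLayersAux A a i).2 →
    ∃ l, AvoidPath A y a u l ∧ ∀ v ∈ l, v ∈ (simLayersAux A a i).2 := by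
  induction i with
  | zero =>
    intro u hu y _
    have hu' : u = a := hu
    subst hu'
    exact ⟨[u], ⟨List.nodup_singleton u, rfl, rfl, List.isChain_singleton u⟩, by
      intro v hv; exact List.mem_singleton.mp hv⟩
  | succ n ih =>
    intro u hu y hy
    have hU2 : (simLayersAux A a (n+1)).2 =
        (simLayersAux A a n).2 ∪
        { w | w ∉ (simLayersAux A a n).2 ∧
          ∀ x ∈ (simLayersAux A a n).2, ∀ z ∉ (simLayersAux A a n).2, A x z ≤ A x w } := rfl
    rw [hU2] at hu hy ⊢
    have hyU : y ∉ (simLayersAux A a n).2 := fun h => hy (Or.inl h)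
    rcases hu with hu | hu
    · obtain ⟨l, hp, hsub⟩ := ih u hu y hyU
      exact ⟨l, hp, fun v hv => Or.inl (hsub v hv)⟩
    · -- u is in the new layer
      have hyL : ¬ (y ∉ (simLayersAux A a n).2 ∧
          ∀ x ∈ (simLayersAux A a n).2, ∀ z ∉ (simLayersAux A a n).2, A x z ≤ A x y) :=
        fun h => hy (Or.inr h)
      have hexists : ∃ w ∈ (simLayersAux A a n).2, ∃ z, z ∉ (simLayersAux A a n).2 ∧
          A w y < A w z := by
        by_contra hcon
        push_neg at hcon
        exact hyL ⟨hyU, hcon⟩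
      obtain ⟨w, hw, z, hz, hwyz⟩ := hexists
      have hwu : A w y < A w u :=
        lt_of_lt_of_le hwyz (hu.2 w hw z hz)
      obtain ⟨l, ⟨hnd, hhd, hlast, hch⟩, hsub⟩ := ih w hw y hyU
      have hul : u ∉ l := fun h => hu.1 (hsub u h)
      refine ⟨l ++ [u], ⟨?_, ?_, ?_, ?_⟩, ?_⟩
      · rw [List.nodup_append]
        exact ⟨hnd, List.nodup_singleton u, by
          intro a ha b hb hab; rw [List.mem_singleton] at hb; subst hab; subst hb; exact hul ha⟩
      · have hne : l ≠ [] := by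
          intro h; rw [h] at hhd; simp at hhd
        rw [List.head?_append_of_ne_nil _ hne]
        exact hhd
      · simpa using List.getLast?_concat l
      · refine List.IsChain.append hch (List.isChain_singleton u) ?_
        intro p hp q hq
        have hpw : p = w := by
          rw [hlast] at hp; exact (Option.some_inj.mp hp).symm
        have hqu : q = u := (Option.some_inj.mp hq).symm
        subst hpw; subst hqu
        exact lt_of_le_of_lt (min_le_left _ _) hwu
      · intro v hv
        rcases List.mem_append.mp hv with hv | hv
        · exact Or.inl (hsub v hv)
        · simp only [List.mem_singleton] at hv
          subst hv; exact Or.inr hu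

theorem stmt_10 {V : Type*} (A : V → V → ℝ)
    (hsym : ∀ u v : V, A u v = A v u) (a : V)
    (i : ℕ) (x : V) (hx : x ∈ simLayer A a i)
    (y : V) (hy : y ∉ (simLayersAux A a i).2) :
    Avoids A y a x := by
  have hx2 : x ∈ (simLayersAux A a i).2 := by
    cases i with
    | zero => exact hx
    | succ n => exact Or.inr hx
  obtain ⟨l, hp, _⟩ := key_avoid A a i x hx2 y hy
  exact ⟨l, hp⟩
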